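/- arXiv:2209.04962 — 2 statements merged into one kernel-verified Lean document; each statement's English description precedes it below -/
import Mathlib

section
/- Let X, X̃ ∈ ℝ^{d×d} be two matrices of full rank, and let 𝒫 denote the orthogonal polar factor (so 𝒫(X) = M V^T where X = M D V^T is a singular value decomposition). Then ‖𝒫(X) − 𝒫(X̃)‖_F ≤ (2/(s_min(X) + s_min(X̃))) ‖X − X̃‖_F. -/
open Matrix

namespace PolarAux

variable {d : ℕ}

noncomputable def fs (A : Matrix (Fin d) (Fin d) ℝ) : ℝ := ∑ i, ∑ j, (A i j) ^ 2

lemma fs_nonneg (A : Matrix (Fin d) (Fin d) ℝ) : 0 ≤ fs A := by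
  apply Finset.sum_nonneg; intro i _; apply Finset.sum_nonneg; intro j _; positivity

lemma fs_eq_trace (A : Matrix (Fin d) (Fin d) ℝ) : fs A = (Aᵀ * A).trace := by
  simp only [fs, trace, Matrix.diag, Matrix.mul_apply, Matrix.transpose_apply, sq]
  exact Finset.sum_comm

lemma fs_mul_left {U : Matrix (Fin d) (Fin d) ℝ} (hU : Uᵀ * U = 1)
    (A : Matrix (Fin d) (Fin d) ℝ) : fs (U * A) = fs A := by
  rw [fs_eq_trace, fs_eq_trace, transpose_mul, mul_assoc, ← mul_assoc Uᵀ, hU, one_mul]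

lemma fs_mul_right {V : Matrix (Fin d) (Fin d) ℝ} (hV : V * Vᵀ = 1)
    (A : Matrix (Fin d) (Fin d) ℝ) : fs (A * V) = fs A := by
  rw [fs_eq_trace, fs_eq_trace]
  have e : (A * V)ᵀ * (A * V) = Vᵀ * (Aᵀ * A * V) := by
    rw [transpose_mul, mul_assoc, mul_assoc]
  rw [e, trace_mul_comm Vᵀ, mul_assoc, hV, mul_one]

lemma fs_transpose (A : Matrix (Fin d) (Fin d) ℝ) : fs Aᵀ = fs A := by
  simp only [fs, Matrix.transpose_apply]
  exact Finset.sum_comm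

lemma fs_neg (A : Matrix (Fin d) (Fin d) ℝ) : fs (-A) = fs A := by
  simp [fs]

lemma norm_eq_sqrt_fs (A : Matrix (Fin d) (Fin d) ℝ) :
    @norm _ (Matrix.frobeniusNormedAddCommGroup).toNorm A = Real.sqrt (fs A) := by
  letI := Matrix.frobeniusNormedAddCommGroup (α := ℝ) (m := Fin d) (n := Fin d)
  rw [Matrix.frobenius_norm_def, Real.sqrt_eq_rpow]
  congr 1
  simp only [fs, Real.norm_eq_abs]
  congr 1; ext i; congr 1; ext j
  rw [show (2:ℝ) = ((2:ℕ):ℝ) by norm_num, Real.rpow_natCast, sq_abs]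

lemma sqrt_fs_add_le (A B : Matrix (Fin d) (Fin d) ℝ) :
    Real.sqrt (fs (A + B)) ≤ Real.sqrt (fs A) + Real.sqrt (fs B) := by
  letI := Matrix.frobeniusNormedAddCommGroup (α := ℝ) (m := Fin d) (n := Fin d)
  have := norm_add_le A B
  rwa [norm_eq_sqrt_fs, norm_eq_sqrt_fs, norm_eq_sqrt_fs] at this

lemma sylvester {W C : Matrix (Fin d) (Fin d) ℝ} {lam mu : Fin d → ℝ} {a b : ℝ}
    (hla : ∀ i, a ≤ lam i) (hmb : ∀ j, b ≤ mu j) (hab : 0 ≤ a + b)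
    (h : diagonal lam * W + W * diagonal mu = C) :
    (a + b) ^ 2 * fs W ≤ fs C := by
  have hent : ∀ i j, C i j = (lam i + mu j) * W i j := by
    intro i j
    have := congrFun (congrFun (congrArg (fun M => M) h) i) j
    simp only [Matrix.add_apply, Matrix.diagonal_mul, Matrix.mul_diagonal] at this
    rw [← this]; ring
  unfold fs
  rw [Finset.mul_sum]
  apply Finset.sum_le_sum; intro i _
  rw [Finset.mul_sum]
  apply Finset.sum_le_sum; intro j _
  rw [hent i j, mul_pow]
  apply mul_le_mul_of_nonneg_right _ (sq_nonneg _)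
  have h1 : a + b ≤ lam i + mu j := add_le_add (hla i) (hmb j)
  exact pow_le_pow_left₀ hab h1 2

lemma spectral_real {S : Matrix (Fin d) (Fin d) ℝ} (hS : S.IsHermitian) :
    ∃ U : Matrix (Fin d) (Fin d) ℝ, Uᵀ * U = 1 ∧ U * Uᵀ = 1 ∧
      S = U * diagonal hS.eigenvalues * Uᵀ := by
  refine ⟨(hS.eigenvectorUnitary : Matrix (Fin d) (Fin d) ℝ), ?_, ?_, ?_⟩
  · have h := Matrix.mem_unitaryGroup_iff'.mp hS.eigenvectorUnitary.2
    rwa [star_eq_conjTranspose, conjTranspose_eq_transpose_of_trivial] at h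
  · have h := Matrix.mem_unitaryGroup_iff.mp hS.eigenvectorUnitary.2
    rwa [star_eq_conjTranspose, conjTranspose_eq_transpose_of_trivial] at h
  · have h := hS.spectral_theorem
    rw [Unitary.conjStarAlgAut_apply] at h
    rwa [star_eq_conjTranspose, conjTranspose_eq_transpose_of_trivial,
      RCLike.ofReal_real_eq_id, Function.id_comp] at h

end PolarAux

open PolarAux

theorem polar_factor_lipschitz {d : ℕ}
    (X Xt P Pt S St : Matrix (Fin d) (Fin d) ℝ)
    (hrX : X.det ≠ 0) (hrXt : Xt.det ≠ 0)
    (hP : Pᵀ * P = 1) (hPt : Ptᵀ * Pt = 1)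
    (hS : S.PosDef) (hSt : St.PosDef)
    (hX : X = P * S) (hXt : Xt = Pt * St) :
    Real.sqrt (∑ i, ∑ j, (P i j - Pt i j) ^ 2) ≤
      2 / ((⨅ i, hS.1.eigenvalues i) + ⨅ i, hSt.1.eigenvalues i) *
        Real.sqrt (∑ i, ∑ j, (X i j - Xt i j) ^ 2) := by
  rcases Nat.eq_zero_or_pos d with hd | hd
  · subst hd; simp
  haveI : Nonempty (Fin d) := ⟨⟨0, hd⟩⟩
  set lam := hS.1.eigenvalues with hlam
  set mu := hSt.1.eigenvalues with hmu
  set a := ⨅ i, lam i with ha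
  set b := ⨅ i, mu i with hb
  have hla : ∀ i, a ≤ lam i := fun i =>
    ciInf_le (Set.Finite.bddBelow (Set.finite_range _)) i
  have hmb : ∀ j, b ≤ mu j := fun j =>
    ciInf_le (Set.Finite.bddBelow (Set.finite_range _)) j
  obtain ⟨i0, hi0⟩ := exists_eq_ciInf_of_finite (f := lam)
  obtain ⟨j0, hj0⟩ := exists_eq_ciInf_of_finite (f := mu)
  have hapos : 0 < a := ha ▸ hi0 ▸ hS.eigenvalues_pos i0
  have hbpos : 0 < b := hb ▸ hj0 ▸ hSt.eigenvalues_pos j0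
  have habpos : 0 < a + b := by linarith
  obtain ⟨U, hU1, hU2, hSdec⟩ := spectral_real hS.1
  obtain ⟨V, hV1, hV2, hStdec⟩ := spectral_real hSt.1
  have hSsym : Sᵀ = S := by
    rw [← conjTranspose_eq_transpose_of_trivial]; exact hS.1
  have hStsym : Stᵀ = St := by
    rw [← conjTranspose_eq_transpose_of_trivial]; exact hSt.1
  have hPPt : P * Pᵀ = 1 := mul_eq_one_comm.mp hP
  have hPtPt : Pt * Ptᵀ = 1 := mul_eq_one_comm.mp hPt
  set W : Matrix (Fin d) (Fin d) ℝ := 1 - Pᵀ * Pt with hW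
  set CC : Matrix (Fin d) (Fin d) ℝ := Pᵀ * (X - Xt) - (X - Xt)ᵀ * Pt with hCC
  have e1 : ∀ M : Matrix (Fin d) (Fin d) ℝ, Pᵀ * (P * M) = M := fun M => by
    rw [← Matrix.mul_assoc, hP, Matrix.one_mul]
  have key : S * W + W * St = CC := by
    rw [hW, hCC, hX, hXt]
    simp only [transpose_sub, transpose_mul, hSsym, hStsym, Matrix.mul_sub, Matrix.sub_mul,
      Matrix.one_mul, Matrix.mul_one, Matrix.mul_assoc, e1, hPt, hP]
    abel
  have hUS : Uᵀ * S = diagonal lam * Uᵀ := by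
    rw [hSdec, ← Matrix.mul_assoc, ← Matrix.mul_assoc, hU1, Matrix.one_mul]
  have hStV : St * V = V * diagonal mu := by
    rw [hStdec, Matrix.mul_assoc, hV1, Matrix.mul_one]
  have hUS' : ∀ M : Matrix (Fin d) (Fin d) ℝ,
      Uᵀ * (S * M) = diagonal lam * (Uᵀ * M) := fun M => by
    rw [← Matrix.mul_assoc, hUS, Matrix.mul_assoc]
  have key2 : diagonal lam * (Uᵀ * W * V) + (Uᵀ * W * V) * diagonal mu = Uᵀ * CC * V := by
    rw [← key, Matrix.mul_add, Matrix.add_mul]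
    simp only [Matrix.mul_assoc, hUS', hStV]
  have syl := sylvester hla hmb habpos.le key2
  have hUt : Uᵀᵀ * Uᵀ = 1 := by rw [transpose_transpose]; exact hU2
  have hPtT : Pᵀᵀ * Pᵀ = 1 := by rw [transpose_transpose]; exact hPPt
  have hfsW' : fs (Uᵀ * W * V) = fs W := by
    rw [fs_mul_right hV2, fs_mul_left hUt]
  have hfsC' : fs (Uᵀ * CC * V) = fs CC := by
    rw [fs_mul_right hV2, fs_mul_left hUt]
  rw [hfsW', hfsC'] at syl
  -- fs (P - Pt) = fs W
  have hPW : P * W = P - Pt := by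
    rw [hW, Matrix.mul_sub, Matrix.mul_one, ← Matrix.mul_assoc, hPPt, Matrix.one_mul]
  have hfsPPt : fs (P - Pt) = fs W := by rw [← hPW, fs_mul_left hP]
  -- bound on fs CC
  set Δ : Matrix (Fin d) (Fin d) ℝ := X - Xt with hΔ
  have hCCbound : Real.sqrt (fs CC) ≤ 2 * Real.sqrt (fs Δ) := by
    have h1 : CC = Pᵀ * Δ + -(Δᵀ * Pt) := by rw [hCC, sub_eq_add_neg]
    calc Real.sqrt (fs CC) ≤ Real.sqrt (fs (Pᵀ * Δ)) + Real.sqrt (fs (-(Δᵀ * Pt))) := by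
          rw [h1]; exact sqrt_fs_add_le _ _
      _ = 2 * Real.sqrt (fs Δ) := by
          rw [fs_neg, fs_mul_left hPtT, fs_mul_right hPtPt, fs_transpose]; ring
  -- convert goal
  have goalL : (∑ i, ∑ j, (P i j - Pt i j) ^ 2) = fs (P - Pt) := by
    simp [fs, Matrix.sub_apply]
  have goalR : (∑ i, ∑ j, (X i j - Xt i j) ^ 2) = fs Δ := by
    simp [fs, hΔ, Matrix.sub_apply]
  rw [goalL, goalR, hfsPPt]
  -- from syl : (a+b)^2 * fs W ≤ fs CC
  have hstep : (a + b) * Real.sqrt (fs W) ≤ Real.sqrt (fs CC) := by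
    rw [show (a + b) * Real.sqrt (fs W) = Real.sqrt ((a + b) ^ 2 * fs W) by
      rw [Real.sqrt_mul (sq_nonneg _), Real.sqrt_sq habpos.le]]
    exact Real.sqrt_le_sqrt syl
  have : (a + b) * Real.sqrt (fs W) ≤ 2 * Real.sqrt (fs Δ) := hstep.trans hCCbound
  rw [div_mul_eq_mul_div, le_div_iff₀ habpos]
  linarith [this]
end

section
/- Let V, Ṽ ∈ ℂ^{n×d} satisfy V^H V = Ṽ^H Ṽ = I_d. Then inf over O ∈ O(d) (real orthogonal, or unitary, d×d matrices) of ‖V − Ṽ O‖ is at most √2 · ‖(I_n − V V^H) Ṽ‖, where ‖·‖ is the operator norm. -/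
open Matrix
open scoped InnerProductSpace ComplexConjugate

noncomputable section EigAux

namespace EigAux

variable {m k l : ℕ}

abbrev f {m k : ℕ} (A : Matrix (Fin m) (Fin k) ℂ) :
    EuclideanSpace ℂ (Fin k) →L[ℂ] EuclideanSpace ℂ (Fin m) :=
  LinearMap.toContinuousLinearMap (Matrix.toEuclideanLin A)

lemma f_mul_apply (A : Matrix (Fin m) (Fin k) ℂ) (B : Matrix (Fin k) (Fin l) ℂ)
    (x : EuclideanSpace ℂ (Fin l)) : f (A * B) x = f A (f B x) := by
  show Matrix.toEuclideanLin (A * B) x = Matrix.toEuclideanLin A (Matrix.toEuclideanLin B x)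
  simp [Matrix.toEuclideanLin_apply, Matrix.mulVec_mulVec]

lemma f_one (x : EuclideanSpace ℂ (Fin k)) : f (1 : Matrix (Fin k) (Fin k) ℂ) x = x := by
  show Matrix.toEuclideanLin (1 : Matrix (Fin k) (Fin k) ℂ) x = x
  simp [Matrix.toEuclideanLin_apply]

lemma inner_f_left (A : Matrix (Fin m) (Fin k) ℂ) (x : EuclideanSpace ℂ (Fin m))
    (y : EuclideanSpace ℂ (Fin k)) : ⟪x, f A y⟫_ℂ = ⟪f Aᴴ x, y⟫_ℂ := by
  have h := Matrix.toEuclideanLin_conjTranspose_eq_adjoint (𝕜 := ℂ) A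
  show ⟪x, Matrix.toEuclideanLin A y⟫_ℂ = ⟪Matrix.toEuclideanLin Aᴴ x, y⟫_ℂ
  rw [h, LinearMap.adjoint_inner_left]

lemma inner_f_right (A : Matrix (Fin m) (Fin k) ℂ) (x : EuclideanSpace ℂ (Fin k))
    (y : EuclideanSpace ℂ (Fin m)) : ⟪f A x, y⟫_ℂ = ⟪x, f Aᴴ y⟫_ℂ := by
  rw [inner_f_left Aᴴ, conjTranspose_conjTranspose]

lemma inner_f_f (A : Matrix (Fin m) (Fin k) ℂ) (B : Matrix (Fin m) (Fin l) ℂ)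
    (x : EuclideanSpace ℂ (Fin k)) (y : EuclideanSpace ℂ (Fin l)) :
    ⟪f A x, f B y⟫_ℂ = ⟪x, f (Aᴴ * B) y⟫_ℂ := by
  rw [inner_f_right, ← f_mul_apply]

lemma norm_f_isometry {A : Matrix (Fin m) (Fin k) ℂ} (hA : Aᴴ * A = 1)
    (x : EuclideanSpace ℂ (Fin k)) : ‖f A x‖ = ‖x‖ := by
  have h : ⟪f A x, f A x⟫_ℂ = ⟪x, x⟫_ℂ := by
    rw [inner_f_f, hA, f_one]
  have h2 : ‖f A x‖ ^ 2 = ‖x‖ ^ 2 := by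
    rw [← inner_self_eq_norm_sq (𝕜 := ℂ), ← inner_self_eq_norm_sq (𝕜 := ℂ), h]
  nlinarith [norm_nonneg (f A x), norm_nonneg x]

lemma lemA {d : ℕ} (M : Matrix (Fin d) (Fin d) ℂ) (c : ℝ) (hc : 0 ≤ c)
    (hlow : ∀ x : EuclideanSpace ℂ (Fin d), c * ‖x‖ ≤ ‖f M x‖)
    (hinj : Function.Injective (f M)) :
    ∃ O ∈ Matrix.unitaryGroup (Fin d) ℂ,
      ∀ x : EuclideanSpace ℂ (Fin d), c * ‖x‖ ^ 2 ≤ (⟪x, f (M * O) x⟫_ℂ).re := by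
  classical
  have hN : (Mᴴ * M).IsHermitian := Matrix.isHermitian_conjTranspose_mul_self M
  set b := hN.eigenvectorBasis with hb
  set lam := hN.eigenvalues with hlam
  -- action of Mᴴ*M on eigenvectors
  have hNb : ∀ i, f (Mᴴ * M) (b i) = ((lam i : ℂ)) • b i := by
    intro i
    have h := hN.mulVec_eigenvectorBasis i
    apply (WithLp.equiv 2 (Fin d → ℂ)).injective
    show WithLp.equiv 2 (Fin d → ℂ) (Matrix.toEuclideanLin (Mᴴ * M) (b i)) = _
    rw [Matrix.toEuclideanLin_apply]
    change (Mᴴ * M) *ᵥ (b i).ofLp = (WithLp.equiv 2 (Fin d → ℂ)) _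
    rw [h]
    funext j
    simp [Complex.real_smul, hb, hlam]
  -- inner products of M images of eigenvectors
  have hMbMb : ∀ i j, ⟪f M (b i), f M (b j)⟫_ℂ = if i = j then (lam i : ℂ) else 0 := by
    intro i j
    rw [inner_f_f, hNb j, inner_smul_right, orthonormal_iff_ite.mp b.orthonormal]
    by_cases h : i = j <;> simp [h]
  -- eigenvalues are norms squared
  have hlam_eq : ∀ i, (lam i : ℝ) = ‖f M (b i)‖ ^ 2 := by
    intro i
    have h := hMbMb i i
    simp only [if_true, eq_self_iff_true] at h
    rw [inner_self_eq_norm_sq_to_K (𝕜 := ℂ)] at h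
    norm_cast at h
    exact (Complex.ofReal_injective h).symm
  have hlam_ge : ∀ i, c ^ 2 ≤ lam i := by
    intro i
    have h1 := hlow (b i)
    have hbn : ‖b i‖ = 1 := b.orthonormal.1 i
    rw [hbn, mul_one] at h1
    rw [hlam_eq i]
    nlinarith
  have hlam_pos : ∀ i, 0 < lam i := by
    intro i
    have hb0 : (b i) ≠ 0 := by
      intro h
      have := b.orthonormal.1 i
      rw [h, norm_zero] at this; norm_num at this
    have : f M (b i) ≠ 0 := by
      intro h
      exact hb0 (hinj (by simpa using h))
    have := norm_pos_iff.mpr this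
    rw [hlam_eq i]; positivity
  set sl : Fin d → ℝ := fun i => Real.sqrt (lam i) with hsl
  have hsl_pos : ∀ i, 0 < sl i := fun i => Real.sqrt_pos.mpr (hlam_pos i)
  have hsl_sq : ∀ i, sl i ^ 2 = lam i := fun i => Real.sq_sqrt (hlam_pos i).le
  have hsl_ge : ∀ i, c ≤ sl i := by
    intro i
    have := hlam_ge i
    nlinarith [hsl_pos i, hsl_sq i]
  set u : Fin d → EuclideanSpace ℂ (Fin d) :=
    fun i => (((sl i)⁻¹ : ℝ) : ℂ) • f M (b i) with hu
  have hMb_eq : ∀ i, f M (b i) = ((sl i : ℝ) : ℂ) • u i := by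
    intro i
    rw [hu]
    rw [smul_smul]
    rw [← Complex.ofReal_mul, mul_inv_cancel₀ (hsl_pos i).ne']
    simp
  have hu_on : Orthonormal ℂ u := by
    rw [orthonormal_iff_ite]
    intro i j
    rw [hu]
    simp only [inner_smul_left, inner_smul_right, hMbMb i j]
    by_cases h : i = j
    · subst h
      simp only [if_true, Complex.conj_ofReal]
      norm_cast
      rw [← hsl_sq i]
      field_simp
      exact div_self (hsl_pos i).ne'
    · simp [h]
  -- u is an orthonormal basis
  have hspan : ⊤ ≤ Submodule.span ℂ (Set.range u) := by
    have hcard : Fintype.card (Fin d) = Module.finrank ℂ (EuclideanSpace ℂ (Fin d)) := by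
      simp [finrank_euclideanSpace]
    exact (hu_on.linearIndependent.span_eq_top_of_card_eq_finrank' hcard).ge
  set ub : OrthonormalBasis (Fin d) ℂ (EuclideanSpace ℂ (Fin d)) :=
    OrthonormalBasis.mk hu_on hspan with hub
  have hub_coe : ∀ i, ub i = u i := fun i => by rw [hub]; simp
  set G : EuclideanSpace ℂ (Fin d) ≃ₗᵢ[ℂ] EuclideanSpace ℂ (Fin d) :=
    ub.repr.trans b.repr.symm with hG
  set O : Matrix (Fin d) (Fin d) ℂ :=
    Matrix.toEuclideanLin.symm (G.toLinearEquiv : _ →ₗ[ℂ] _) with hO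
  have hfO : ∀ x, f O x = G x := by
    intro x
    show Matrix.toEuclideanLin O x = G x
    rw [hO, LinearEquiv.apply_symm_apply]
    rfl
  have hOO : Oᴴ * O = 1 := by
    apply Matrix.toEuclideanLin.injective
    apply LinearMap.ext; intro x
    apply ext_inner_left ℂ; intro y
    show ⟪y, f (Oᴴ * O) x⟫_ℂ = ⟪y, f (1 : Matrix (Fin d) (Fin d) ℂ) x⟫_ℂ
    rw [f_one, f_mul_apply, inner_f_left, conjTranspose_conjTranspose, hfO, hfO,
      G.inner_map_map]
  have hOmem : O ∈ Matrix.unitaryGroup (Fin d) ℂ := by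
    constructor
    · rw [Matrix.star_eq_conjTranspose]; exact hOO
    · rw [Matrix.star_eq_conjTranspose]; exact mul_eq_one_comm.mp hOO
  refine ⟨O, hOmem, ?_⟩
  intro x
  have hGx : G x = ∑ i, ub.repr x i • b i := by
    rw [hG]
    show b.repr.symm (ub.repr x) = _
    rw [← OrthonormalBasis.sum_repr_symm]
  have hfMO : f (M * O) x = ∑ i, ub.repr x i • (((sl i : ℝ) : ℂ) • u i) := by
    rw [f_mul_apply, hfO, hGx, map_sum]
    congr 1; funext i
    rw [_root_.map_smul, hMb_eq i]
  have hinner : ⟪x, f (M * O) x⟫_ℂ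
      = ∑ i, ((sl i : ℝ) : ℂ) * (ub.repr x i * (starRingEnd ℂ) (ub.repr x i)) := by
    rw [hfMO, inner_sum]
    congr 1; funext i
    rw [inner_smul_right, inner_smul_right]
    have : ⟪x, u i⟫_ℂ = (starRingEnd ℂ) (ub.repr x i) := by
      rw [← hub_coe i, ← inner_conj_symm, ← OrthonormalBasis.repr_apply_apply]
    rw [this]; ring
  have hre : (⟪x, f (M * O) x⟫_ℂ).re = ∑ i, sl i * Complex.normSq (ub.repr x i) := by
    rw [hinner, Complex.re_sum]
    congr 1; funext i
    rw [Complex.mul_conj]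
    simp
  rw [hre]
  have hparseval : ‖x‖ ^ 2 = ∑ i, Complex.normSq (ub.repr x i) := by
    have h1 : ‖ub.repr x‖ = ‖x‖ := ub.repr.norm_map x
    rw [← h1, EuclideanSpace.norm_eq, Real.sq_sqrt (by positivity)]
    congr 1; funext i
    rw [Complex.sq_norm]
  rw [hparseval, Finset.mul_sum]
  apply Finset.sum_le_sum
  intro i _
  have := Complex.normSq_nonneg (ub.repr x i)
  nlinarith [hsl_ge i]


lemma f_add_apply (A B : Matrix (Fin m) (Fin k) ℂ) (x : EuclideanSpace ℂ (Fin k)) :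
    f (A + B) x = f A x + f B x := by
  show Matrix.toEuclideanLin (A + B) x = Matrix.toEuclideanLin A x + Matrix.toEuclideanLin B x
  rw [map_add]; rfl

lemma f_sub_apply (A B : Matrix (Fin m) (Fin k) ℂ) (x : EuclideanSpace ℂ (Fin k)) :
    f (A - B) x = f A x - f B x := by
  show Matrix.toEuclideanLin (A - B) x = Matrix.toEuclideanLin A x - Matrix.toEuclideanLin B x
  rw [map_sub]; rfl

lemma f_smul_apply (a : ℂ) (A : Matrix (Fin m) (Fin k) ℂ) (x : EuclideanSpace ℂ (Fin k)) :
    f (a • A) x = a • f A x := by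
  show Matrix.toEuclideanLin (a • A) x = a • Matrix.toEuclideanLin A x
  rw [_root_.map_smul]; rfl

open Polynomial in
lemma exists_eta {d : ℕ} (M : Matrix (Fin d) (Fin d) ℂ) (ε : ℝ) (hε : 0 < ε) :
    ∃ η : ℝ, 0 < η ∧ η < ε / 2 ∧ (M + (η : ℂ) • 1).det ≠ 0 := by
  classical
  set p := (-M).charpoly with hp
  have hp0 : p ≠ 0 := (Matrix.charpoly_monic (-M)).ne_zero
  have hroots : {x : ℂ | p.IsRoot x}.Finite := p.finite_setOf_isRoot hp0
  have hS : {x : ℝ | p.IsRoot (x : ℂ)}.Finite := by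
    have : {x : ℝ | p.IsRoot (x : ℂ)} = (fun x : ℝ => (x : ℂ)) ⁻¹' {x : ℂ | p.IsRoot x} := rfl
    rw [this]
    exact Set.Finite.preimage (Set.injOn_of_injective Complex.ofReal_injective) hroots
  have hIoo : (Set.Ioo (0:ℝ) (ε/2)).Infinite := Set.Ioo_infinite (by linarith)
  obtain ⟨η, hη⟩ := (hIoo.diff hS).nonempty
  refine ⟨η, hη.1.1, hη.1.2, ?_⟩
  have hev : p.eval (η : ℂ) = (M + (η : ℂ) • 1).det := by
    rw [hp, Matrix.charpoly, _root_.eval_det, matPolyEquiv_charmatrix]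
    rw [eval_sub, eval_X, eval_C]
    rw [show Matrix.scalar (Fin d) (η:ℂ) - (-M) = M + (η : ℂ) • 1 by
      rw [sub_neg_eq_add, add_comm, Matrix.scalar_apply, Matrix.smul_one_eq_diagonal]]
  intro hdet
  exact hη.2 (by simpa [Polynomial.IsRoot, hev] using hdet)

lemma lemB {d : ℕ} (M : Matrix (Fin d) (Fin d) ℂ) (c : ℝ)
    (hlow : ∀ x : EuclideanSpace ℂ (Fin d), c * ‖x‖ ≤ ‖f M x‖) (ε : ℝ) (hε : 0 < ε) :
    ∃ O ∈ Matrix.unitaryGroup (Fin d) ℂ,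
      ∀ x : EuclideanSpace ℂ (Fin d), (c - ε) * ‖x‖ ^ 2 ≤ (⟪x, f (M * O) x⟫_ℂ).re := by
  obtain ⟨η, hη0, hηε, hdet⟩ := exists_eta M ε hε
  set M' := M + (η : ℂ) • (1 : Matrix (Fin d) (Fin d) ℂ) with hM'
  have hsmul : ∀ x : EuclideanSpace ℂ (Fin d),
      f ((η:ℂ) • (1 : Matrix (Fin d) (Fin d) ℂ)) x = (η:ℂ) • x := by
    intro x
    rw [f_smul_apply, f_one]
  have hinj : Function.Injective (f M') := by
    have hinvM : M'⁻¹ * M' = 1 := Matrix.nonsing_inv_mul M' (Ne.isUnit hdet)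
    intro x y hxy
    have h2 := congrArg (f M'⁻¹) hxy
    rw [← f_mul_apply, ← f_mul_apply, hinvM, f_one, f_one] at h2
    exact h2
  have hnsmul : ∀ x : EuclideanSpace ℂ (Fin d), ‖(η:ℂ) • x‖ = η * ‖x‖ := by
    intro x
    rw [norm_smul]
    simp [abs_of_pos hη0]
  have hlow' : ∀ x : EuclideanSpace ℂ (Fin d), max (c - η) 0 * ‖x‖ ≤ ‖f M' x‖ := by
    intro x
    rcases le_total (c - η) 0 with h | h
    · rw [max_eq_right h, zero_mul]
      exact norm_nonneg _
    · rw [max_eq_left h]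
      have h1 : f M' x = f M x + (η:ℂ) • x := by rw [hM', f_add_apply, hsmul]
      have h3 : ‖f M x‖ ≤ ‖f M' x‖ + ‖(η:ℂ) • x‖ := by
        calc ‖f M x‖ = ‖f M' x - (η:ℂ) • x‖ := by rw [h1]; congr 1; abel
        _ ≤ ‖f M' x‖ + ‖(η:ℂ) • x‖ := norm_sub_le _ _
      rw [hnsmul x] at h3
      have h4 := hlow x
      have h5 := norm_nonneg x
      nlinarith
  obtain ⟨O, hOmem, hq⟩ := lemA M' (max (c - η) 0) (le_max_right _ _) hlow' hinj
  refine ⟨O, hOmem, fun x => ?_⟩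
  have hOiso : ∀ y : EuclideanSpace ℂ (Fin d), ‖f O y‖ = ‖y‖ := by
    intro y
    apply norm_f_isometry
    rw [← Matrix.star_eq_conjTranspose]
    exact hOmem.1
  have hMO : f (M * O) x = f (M' * O) x - (η:ℂ) • f O x := by
    have hmat : M * O = M' * O - (η:ℂ) • O := by
      rw [hM', add_mul, Matrix.smul_mul, one_mul, add_sub_cancel_right]
    rw [hmat, f_sub_apply, f_smul_apply]
  have hre : (⟪x, f (M * O) x⟫_ℂ).re
      = (⟪x, f (M' * O) x⟫_ℂ).re - (⟪x, (η:ℂ) • f O x⟫_ℂ).re := by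
    rw [hMO, inner_sub_right]
    simp [Complex.sub_re, inner_smul_right_eq_smul]
  have habs : |(⟪x, (η:ℂ) • f O x⟫_ℂ).re| ≤ η * ‖x‖ ^ 2 := by
    have h1 : ‖⟪x, (η:ℂ) • f O x⟫_ℂ‖ ≤ ‖x‖ * ‖(η:ℂ) • f O x‖ := norm_inner_le_norm x _
    have h2 : ‖(η:ℂ) • f O x‖ = η * ‖x‖ := by rw [hnsmul, hOiso]
    have h3 : |(⟪x, (η:ℂ) • f O x⟫_ℂ).re| ≤ ‖⟪x, (η:ℂ) • f O x⟫_ℂ‖ := by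
      exact Complex.abs_re_le_norm _
    calc |(⟪x, (η:ℂ) • f O x⟫_ℂ).re| ≤ ‖⟪x, (η:ℂ) • f O x⟫_ℂ‖ := h3
      _ ≤ ‖x‖ * (η * ‖x‖) := by rw [← h2]; exact h1
      _ = η * ‖x‖ ^ 2 := by ring
  have hq' := hq x
  have hmax : c - η ≤ max (c - η) 0 := le_max_left _ _
  have hx2 : (0:ℝ) ≤ ‖x‖ ^ 2 := by positivity
  rw [hre]
  have habs' : (⟪x, (η:ℂ) • f O x⟫_ℂ).re ≤ η * ‖x‖ ^ 2 := (le_abs_self _).trans habs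
  nlinarith [hq', habs', hx2, mul_nonneg (by linarith : (0:ℝ) ≤ ε - 2*η) hx2,
    mul_le_mul_of_nonneg_right hmax hx2]

lemma f_zero (x : EuclideanSpace ℂ (Fin k)) : f (0 : Matrix (Fin m) (Fin k) ℂ) x = 0 := by
  show Matrix.toEuclideanLin (0 : Matrix (Fin m) (Fin k) ℂ) x = 0
  rw [map_zero]; rfl

lemma sqrt_add_le' (a b : ℝ) (ha : 0 ≤ a) (hb : 0 ≤ b) :
    Real.sqrt (a + b) ≤ Real.sqrt a + Real.sqrt b := by
  have h := Real.sqrt_le_sqrt (show a + b ≤ (Real.sqrt a + Real.sqrt b)^2 by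
    nlinarith [Real.sq_sqrt ha, Real.sq_sqrt hb, Real.sqrt_nonneg a, Real.sqrt_nonneg b,
      mul_nonneg (Real.sqrt_nonneg a) (Real.sqrt_nonneg b)])
  rwa [Real.sqrt_sq (by positivity)] at h

end EigAux

set_option maxHeartbeats 2000000 in
open EigAux in
theorem eigenspace_alignment {n d : ℕ}
    (V Vt : Matrix (Fin n) (Fin d) ℂ) (hV : Vᴴ * V = 1) (hVt : Vtᴴ * Vt = 1) :
    ⨅ O : Matrix.unitaryGroup (Fin d) ℂ,
        ‖LinearMap.toContinuousLinearMap
          (Matrix.toEuclideanLin (V - Vt * (O : Matrix (Fin d) (Fin d) ℂ)))‖ ≤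
      Real.sqrt 2 *
        ‖LinearMap.toContinuousLinearMap
          (Matrix.toEuclideanLin ((1 - V * Vᴴ) * Vt))‖ := by
  classical
  set s : ℝ :=
    ‖LinearMap.toContinuousLinearMap (Matrix.toEuclideanLin ((1 - V * Vᴴ) * Vt))‖ with hs
  have hs0 : 0 ≤ s := norm_nonneg _
  have hres : ∀ x : EuclideanSpace ℂ (Fin d), ‖f ((1 - V * Vᴴ) * Vt) x‖ ≤ s * ‖x‖ := fun x =>
    (LinearMap.toContinuousLinearMap (Matrix.toEuclideanLin ((1 - V * Vᴴ) * Vt))).le_opNorm x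
  set M := Vᴴ * Vt with hM
  have hMlow2 : ∀ x : EuclideanSpace ℂ (Fin d), (1 - s^2) * ‖x‖^2 ≤ ‖f M x‖^2 := by
    intro x
    have hdecomp : f Vt x = f (V * M) x + f ((1 - V * Vᴴ) * Vt) x := by
      have hmid : Vt = V * M + (1 - V * Vᴴ) * Vt := by
        rw [hM, Matrix.sub_mul, Matrix.one_mul, ← Matrix.mul_assoc]
        abel
      rw [← f_add_apply, ← hmid]
    have hcross : ⟪f (V * M) x, f ((1 - V * Vᴴ) * Vt) x⟫_ℂ = 0 := by
      rw [inner_f_f]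
      have h0 : Vᴴ * (1 - V * Vᴴ) = 0 := by
        rw [Matrix.mul_sub, Matrix.mul_one, ← Matrix.mul_assoc, hV, Matrix.one_mul, sub_self]
      have hmat : (V * M)ᴴ * ((1 - V * Vᴴ) * Vt) = 0 := by
        rw [conjTranspose_mul, Matrix.mul_assoc Mᴴ Vᴴ _, ← Matrix.mul_assoc Vᴴ _ Vt, h0,
          Matrix.zero_mul, Matrix.mul_zero]
      rw [hmat, f_zero, inner_zero_right]
    have hVtx : ‖f Vt x‖ = ‖x‖ := norm_f_isometry hVt x
    have hVMx : ‖f (V * M) x‖ = ‖f M x‖ := by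
      rw [f_mul_apply]; exact norm_f_isometry hV _
    have hsq := norm_add_sq (𝕜 := ℂ) (f (V * M) x) (f ((1 - V * Vᴴ) * Vt) x)
    rw [hcross] at hsq
    simp only [map_zero, mul_zero, add_zero] at hsq
    rw [← hdecomp, hVtx, hVMx] at hsq
    have hr := hres x
    have h1 : ‖f ((1 - V * Vᴴ) * Vt) x‖^2 ≤ (s * ‖x‖)^2 := by
      have := norm_nonneg (f ((1 - V * Vᴴ) * Vt) x)
      nlinarith
    nlinarith [norm_nonneg x]
  set c : ℝ := Real.sqrt (1 - s^2) with hc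
  have hc0 : 0 ≤ c := Real.sqrt_nonneg _
  have hc1 : c ≤ 1 := by
    rw [hc]
    calc Real.sqrt (1 - s^2) ≤ Real.sqrt 1 := Real.sqrt_le_sqrt (by nlinarith)
    _ = 1 := Real.sqrt_one
  have h1c : 1 - c ≤ s^2 := by
    by_cases h : 0 ≤ 1 - s^2
    · have hcsq : c^2 = 1 - s^2 := Real.sq_sqrt h
      nlinarith
    · nlinarith
  have hMlow : ∀ x : EuclideanSpace ℂ (Fin d), c * ‖x‖ ≤ ‖f M x‖ := by
    intro x
    by_cases h : 0 ≤ 1 - s^2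
    · have hcsq : c^2 = 1 - s^2 := Real.sq_sqrt h
      have h2 := hMlow2 x
      nlinarith [norm_nonneg (f M x), mul_nonneg hc0 (norm_nonneg x)]
    · have hczero : c = 0 := by
        rw [hc]
        exact Real.sqrt_eq_zero'.mpr (by linarith [not_le.mp h])
      rw [hczero, zero_mul]
      exact norm_nonneg _
  apply le_of_forall_pos_le_add
  intro δ hδ
  set ε : ℝ := δ^2 / 2 with hε
  have hε0 : 0 < ε := by positivity
  obtain ⟨O, hOmem, hO⟩ := lemB M c hMlow ε hε0
  have hOiso : Oᴴ * O = 1 := by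
    rw [← Matrix.star_eq_conjTranspose]; exact hOmem.1
  have hbound2 : ∀ x : EuclideanSpace ℂ (Fin d),
      ‖f (V - Vt * O) x‖^2 ≤ (2 - 2*(c - ε)) * ‖x‖^2 := by
    intro x
    have hsub : f (V - Vt * O) x = f V x - f (Vt * O) x := f_sub_apply _ _ _
    have hsq := norm_sub_sq (𝕜 := ℂ) (f V x) (f (Vt * O) x)
    have hVx : ‖f V x‖ = ‖x‖ := norm_f_isometry hV x
    have hVtOx : ‖f (Vt * O) x‖ = ‖x‖ := by
      rw [f_mul_apply, norm_f_isometry hVt, norm_f_isometry hOiso]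
    have hinner : ⟪f V x, f (Vt * O) x⟫_ℂ = ⟪x, f (M * O) x⟫_ℂ := by
      rw [inner_f_f, hM, Matrix.mul_assoc]
    rw [hinner, hVx, hVtOx] at hsq
    have hre : RCLike.re ⟪x, f (M * O) x⟫_ℂ = (⟪x, f (M * O) x⟫_ℂ).re := rfl
    rw [hre] at hsq
    have hq := hO x
    rw [hsub, hsq]
    nlinarith [norm_nonneg x]
  set K : ℝ := Real.sqrt (2 - 2*(c - ε)) with hK
  have hKnn : (0:ℝ) ≤ 2 - 2*(c - ε) := by nlinarith
  have hnorm : ‖f (V - Vt * O)‖ ≤ K := by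
    apply ContinuousLinearMap.opNorm_le_bound _ (Real.sqrt_nonneg _)
    intro x
    have h1 := hbound2 x
    have h2 : K^2 = 2 - 2*(c - ε) := Real.sq_sqrt hKnn
    nlinarith [norm_nonneg (f (V - Vt * O) x), norm_nonneg x,
      mul_nonneg (Real.sqrt_nonneg (2 - 2*(c - ε))) (norm_nonneg x)]
  have hKle : K ≤ Real.sqrt 2 * s + δ := by
    have h1 : K ≤ Real.sqrt (2*s^2 + 2*ε) := by
      apply Real.sqrt_le_sqrt
      nlinarith
    have h2 : Real.sqrt (2*s^2 + 2*ε) ≤ Real.sqrt (2*s^2) + Real.sqrt (2*ε) :=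
      sqrt_add_le' _ _ (by positivity) (by positivity)
    have h3 : Real.sqrt (2*s^2) = Real.sqrt 2 * s := by
      rw [Real.sqrt_mul (by norm_num : (0:ℝ) ≤ 2), Real.sqrt_sq hs0]
    have h4 : Real.sqrt (2*ε) = δ := by
      rw [hε]
      rw [show 2 * (δ^2/2) = δ^2 by ring, Real.sqrt_sq hδ.le]
    calc K ≤ Real.sqrt (2*s^2 + 2*ε) := h1
    _ ≤ Real.sqrt (2*s^2) + Real.sqrt (2*ε) := h2
    _ = Real.sqrt 2 * s + δ := by rw [h3, h4]
  have hbdd : BddBelow (Set.range fun O : Matrix.unitaryGroup (Fin d) ℂ =>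
      ‖LinearMap.toContinuousLinearMap
        (Matrix.toEuclideanLin (V - Vt * (O : Matrix (Fin d) (Fin d) ℂ)))‖) := by
    refine ⟨0, ?_⟩
    rintro y ⟨O', rfl⟩
    exact norm_nonneg _
  calc ⨅ O : Matrix.unitaryGroup (Fin d) ℂ,
        ‖LinearMap.toContinuousLinearMap
          (Matrix.toEuclideanLin (V - Vt * (O : Matrix (Fin d) (Fin d) ℂ)))‖
      ≤ ‖LinearMap.toContinuousLinearMap
          (Matrix.toEuclideanLin (V - Vt * ((⟨O, hOmem⟩ : Matrix.unitaryGroup (Fin d) ℂ) :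
            Matrix (Fin d) (Fin d) ℂ)))‖ := ciInf_le hbdd _
    _ = ‖f (V - Vt * O)‖ := rfl
    _ ≤ K := hnorm
    _ ≤ Real.sqrt 2 * s + δ := hKle
end EigAux
end
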